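/- Suppose U is a set of increasing homeomorphisms of ℝ and 𝓕 is a countable set of injective partial functions from ℝ to ℝ such that for every (x,y) ∈ ℝ² there is φ ∈ U with φ(x) = y and such that for every z ≠ x there is f ∈ 𝓕 with z in the domain of f and φ(z) = f(z). Let ∼ be the equivalence relation on ℝ generated by the relation R = {(u,v) : f(u) = v for some f ∈ 𝓕}. Then there is no good weak U-anonymous ℝ/∼-predictor. -/

import Mathlib

open MeasureTheory Set

/-- Suppose `U` is a set of increasing homeomorphisms of `ℝ` (strictly monotone bijections)
and `𝓕` is a countable set of injective partial functions `ℝ →. ℝ` such that for every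
`(x, y)` there is `φ ∈ U` with `φ x = y` and, for every `z ≠ x`, some `f ∈ 𝓕` defined at `z`
with `φ z = f z`.  Let `∼` be the equivalence relation generated by
`R = {(u, v) : f u = v for some f ∈ 𝓕}`.  Then there is no good, weak, `U`-anonymous
`ℝ/∼`-predictor.  A weak predictor is encoded as `P : ℝ → (ℝ → S) → S`, where `P x F`
stands for the prediction from `F↾(ℝ \ {x})` (so `P x` depends only on those values), and
anonymity reads `P a (F ∘ φ) = P (φ a) F`. -/
theorem stmt_14 (U : Set (ℝ → ℝ))
    (hU : ∀ φ ∈ U, Function.Bijective φ ∧ StrictMono φ)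
    (𝓕 : Set (ℝ →. ℝ)) (hcount : 𝓕.Countable)
    (hinj : ∀ f ∈ 𝓕, ∀ a b c : ℝ, c ∈ f a → c ∈ f b → a = b)
    (hpath : ∀ x y : ℝ, ∃ φ ∈ U, φ x = y ∧ ∀ z : ℝ, z ≠ x → ∃ f ∈ 𝓕, φ z ∈ f z)
    (r : Setoid ℝ)
    (hr : ∀ a b : ℝ, r.r a b ↔ Relation.EqvGen (fun u v : ℝ => ∃ f ∈ 𝓕, v ∈ f u) a b) :
    ¬ ∃ P : ℝ → (ℝ → Quotient r) → Quotient r,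
        (∀ (x : ℝ) (F G : ℝ → Quotient r), (∀ z : ℝ, z ≠ x → F z = G z) → P x F = P x G) ∧
        (∀ φ ∈ U, ∀ (a : ℝ) (F : ℝ → Quotient r), P a (F ∘ φ) = P (φ a) F) ∧
        (∀ F : ℝ → Quotient r, volume {x : ℝ | P x F ≠ F x} = 0) := by
  classical
  rintro ⟨P, hweak, hanon, hgood⟩
  set F : ℝ → Quotient r := fun z => Quotient.mk r z with hF
  -- Step 1: `P · F` is constant.
  have hconst : ∀ x y : ℝ, P x F = P y F := by
    intro x y
    obtain ⟨φ, hφU, hφx, hφ⟩ := hpath x y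
    have h1 : P x (F ∘ φ) = P x F := by
      apply hweak
      intro z hz
      obtain ⟨f, hf, hmem⟩ := hφ z hz
      show Quotient.mk r (φ z) = Quotient.mk r z
      refine Quot.sound ?_
      exact (hr (φ z) z).mpr (Relation.EqvGen.symm _ _ (Relation.EqvGen.rel z (φ z) ⟨f, hf, hmem⟩))
    have h2 : P x (F ∘ φ) = P (φ x) F := hanon φ hφU x F
    rw [← h1, h2, hφx]
  -- Step 2: each equivalence class is countable.
  have hgc : ∀ u : ℝ, {v : ℝ | ∃ f ∈ 𝓕, v ∈ f u ∨ u ∈ f v}.Countable := by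
    intro u
    have heq : {v : ℝ | ∃ f ∈ 𝓕, v ∈ f u ∨ u ∈ f v}
        = ⋃ f ∈ 𝓕, ({v : ℝ | v ∈ f u} ∪ {v : ℝ | u ∈ f v}) := by
      ext v
      simp only [Set.mem_setOf_eq, Set.mem_iUnion, Set.mem_union, Set.mem_setOf_eq]
      constructor
      · rintro ⟨f, hf, h⟩; exact ⟨f, hf, h⟩
      · rintro ⟨f, hf, h⟩; exact ⟨f, hf, h⟩
    rw [heq]
    refine Set.Countable.biUnion hcount ?_
    intro f hf
    refine Set.Countable.union ?_ ?_
    · exact Set.Subsingleton.countable (fun a ha b hb => Part.mem_unique ha hb)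
    · exact Set.Subsingleton.countable (fun a ha b hb => hinj f hf a b u ha hb)
  have horbit : ∀ x : ℝ,
      {y : ℝ | Relation.EqvGen (fun u v : ℝ => ∃ f ∈ 𝓕, v ∈ f u) x y}.Countable := by
    intro x
    set g : ℝ → Set ℝ := fun u => {v : ℝ | ∃ f ∈ 𝓕, v ∈ f u ∨ u ∈ f v} with hg
    let D : ℕ → Set ℝ := fun n => Nat.rec {x} (fun _ S => S ∪ ⋃ u ∈ S, g u) n
    have hDc : ∀ n, (D n).Countable := by
      intro n
      induction n with
      | zero => exact Set.countable_singleton x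
      | succ n ih => exact ih.union (Set.Countable.biUnion ih fun u _ => hgc u)
    set C : Set ℝ := ⋃ n, D n with hC
    have hCc : C.Countable := Set.countable_iUnion hDc
    have hxC : x ∈ C := Set.mem_iUnion.mpr ⟨0, rfl⟩
    have hstep : ∀ u ∈ C, ∀ v ∈ g u, v ∈ C := by
      intro u hu v hv
      obtain ⟨n, hn⟩ := Set.mem_iUnion.mp hu
      exact Set.mem_iUnion.mpr ⟨n + 1, Or.inr (Set.mem_biUnion hn hv)⟩
    have key : ∀ a b : ℝ, Relation.EqvGen (fun u v : ℝ => ∃ f ∈ 𝓕, v ∈ f u) a b →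
        ((a ∈ C → b ∈ C) ∧ (b ∈ C → a ∈ C)) := by
      intro a b h
      induction h with
      | rel a b hab =>
        obtain ⟨f, hf, hm⟩ := hab
        exact ⟨fun ha => hstep a ha b ⟨f, hf, Or.inl hm⟩,
               fun hb => hstep b hb a ⟨f, hf, Or.inr hm⟩⟩
      | refl a => exact ⟨id, id⟩
      | symm a b _ ih => exact ⟨ih.2, ih.1⟩
      | trans a b c _ _ ih1 ih2 =>
          exact ⟨fun ha => ih2.1 (ih1.1 ha), fun hc => ih1.2 (ih2.2 hc)⟩
    refine Set.Countable.mono ?_ hCc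
    intro y hy
    exact (key x y hy).1 hxC
  -- Step 3: derive the contradiction.
  set c : Quotient r := P 0 F with hc
  set A : Set ℝ := {x : ℝ | F x = c} with hA
  have hAc0 : volume Aᶜ = 0 := by
    have : Aᶜ = {x : ℝ | P x F ≠ F x} := by
      ext x
      simp only [Set.mem_compl_iff, hA, Set.mem_setOf_eq]
      constructor
      · intro h h'
        exact h (by rw [← h', hconst x 0])
      · intro h h'
        exact h (by rw [h', hc, hconst 0 x])
    rw [this]
    exact hgood F
  have hAcount : A.Countable := by
    rcases A.eq_empty_or_nonempty with h | ⟨x₀, hx₀⟩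
    · rw [h]; exact Set.countable_empty
    · refine Set.Countable.mono ?_ (horbit x₀)
      intro y hy
      have hqe : Quotient.mk r x₀ = Quotient.mk r y := by
        have h1 : F x₀ = c := hx₀
        have h2 : F y = c := hy
        show F x₀ = F y
        rw [h1, h2]
      exact (hr x₀ y).mp (Quotient.exact hqe)
  have hA0 : volume A = 0 := hAcount.measure_zero _
  have huniv : volume (Set.univ : Set ℝ) = 0 := by
    rw [← Set.union_compl_self A]
    refine le_antisymm ?_ zero_le
    calc volume (A ∪ Aᶜ) ≤ volume A + volume Aᶜ := measure_union_le _ _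
    _ = 0 := by rw [hA0, hAc0, add_zero]
  rw [Real.volume_univ] at huniv
  exact ENNReal.top_ne_zero huniv
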